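/- arXiv:2008.02006 — 9 statements merged into one kernel-verified Lean document; each statement's English description precedes it below -/
import Mathlib

section
/- Let G be a simple connected graph with vertex set V = {1,...,n} and let M be the family of maximal independent sets of G. Then the union over all A in M of the intervals [A \ Int(A), A ∪ Ext(A)] equals the full power set 2^V. -/
open Finset

/-- A set of vertices is independent: no two of its vertices are adjacent. -/
def Indep {n : ℕ} (G : SimpleGraph (Fin n)) (A : Finset (Fin n)) : Prop :=
  ∀ u ∈ A, ∀ v ∈ A, ¬ G.Adj u v

instance {n : ℕ} (G : SimpleGraph (Fin n)) [DecidableRel G.Adj] (A : Finset (Fin n)) :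
    Decidable (Indep G A) := by unfold Indep; infer_instance

/-- A maximal independent set. -/
def MaxIndep {n : ℕ} (G : SimpleGraph (Fin n)) (A : Finset (Fin n)) : Prop :=
  Indep G A ∧ ∀ B, Indep G B → A ⊆ B → A = B

/-- Externally active vertices with respect to the independent set `A`:
vertices outside `A` adjacent to and greater than some vertex of `A`. -/
def ExtAct {n : ℕ} (G : SimpleGraph (Fin n)) [DecidableRel G.Adj] (A : Finset (Fin n)) :
    Finset (Fin n) :=
  univ.filter (fun v => v ∉ A ∧ ∃ a ∈ A, G.Adj v a ∧ a < v)

/-- The neighbours of `v` that can substitute `v` in `A` keeping independence. -/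
def Subs {n : ℕ} (G : SimpleGraph (Fin n)) [DecidableRel G.Adj] (A : Finset (Fin n))
    (v : Fin n) : Finset (Fin n) :=
  univ.filter (fun u => G.Adj v u ∧ Indep G (insert u (A.erase v)))

/-- Internally active vertices of `A`: vertices `v ∈ A` with `Subs v = ∅` or
`v` greater than every element of `Subs v`. -/
def IntAct {n : ℕ} (G : SimpleGraph (Fin n)) [DecidableRel G.Adj] (A : Finset (Fin n)) :
    Finset (Fin n) :=
  A.filter (fun v => ∀ u ∈ Subs G A v, u < v)

/-- The interval `[A;B]` of the Boolean lattice. -/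
def Itv {n : ℕ} (A B : Finset (Fin n)) : Set (Finset (Fin n)) :=
  {X | A ⊆ X ∧ X ⊆ B}

open Finset

def gkey {n : ℕ} (X : Finset (Fin n)) (v : Fin n) : ℕ :=
  if v ∈ X then v.val else 2 * n - 1 - v.val

lemma gkey_inj {n : ℕ} (X : Finset (Fin n)) {v w : Fin n} (h : gkey X v = gkey X w) :
    v = w := by
  have hv := v.isLt; have hw := w.isLt
  unfold gkey at h
  by_cases hvX : v ∈ X <;> by_cases hwX : w ∈ X
  · rw [if_pos hvX, if_pos hwX] at h; exact Fin.ext h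
  · rw [if_pos hvX, if_neg hwX] at h; exact absurd h (by omega)
  · rw [if_neg hvX, if_pos hwX] at h; exact absurd h (by omega)
  · rw [if_neg hvX, if_neg hwX] at h; exact Fin.ext (by omega)

lemma gkey_lt {n : ℕ} (X : Finset (Fin n)) {v w : Fin n} (h : gkey X v < gkey X w) :
    (v ∈ X ∧ w ∉ X) ∨ (v ∈ X ∧ w ∈ X ∧ v < w) ∨ (v ∉ X ∧ w ∉ X ∧ w < v) := by
  have hv := v.isLt; have hw := w.isLt
  unfold gkey at h
  by_cases hvX : v ∈ X <;> by_cases hwX : w ∈ X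
  · rw [if_pos hvX, if_pos hwX] at h
    exact Or.inr (Or.inl ⟨hvX, hwX, Fin.lt_def.mpr h⟩)
  · exact Or.inl ⟨hvX, hwX⟩
  · rw [if_neg hvX, if_pos hwX] at h; omega
  · rw [if_neg hvX, if_neg hwX] at h
    exact Or.inr (Or.inr ⟨hvX, hwX, Fin.lt_def.mpr (by omega)⟩)

def greedy {n : ℕ} (G : SimpleGraph (Fin n)) (key : Fin n → ℕ) (v : Fin n) : Prop :=
  ∀ u : Fin n, key u < key v → G.Adj u v → ¬ greedy G key u
termination_by key v

lemma greedy_iff {n : ℕ} (G : SimpleGraph (Fin n)) (key : Fin n → ℕ) (v : Fin n) :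
    greedy G key v ↔ ∀ u : Fin n, key u < key v → G.Adj u v → ¬ greedy G key u := by
  rw [greedy]

/-- The intervals generated by the maximal independent sets cover the Boolean
lattice of the vertex set of a connected graph. -/
theorem cover_theorem (n : ℕ) (G : SimpleGraph (Fin n)) [DecidableRel G.Adj]
    (hconn : G.Connected) :
    (⋃ A ∈ {A : Finset (Fin n) | MaxIndep G A},
      Itv (A \ IntAct G A) (A ∪ ExtAct G A)) = Set.univ := by
  classical
  ext X
  simp only [Set.mem_iUnion, Set.mem_univ, iff_true, Set.mem_setOf_eq]
  set key := gkey X with hkey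
  set A : Finset (Fin n) := univ.filter (fun v => greedy G key v) with hA
  have memA : ∀ v, v ∈ A ↔ greedy G key v := by
    intro v; simp [hA]
  have hnot : ∀ v, v ∉ A → ∃ u, key u < key v ∧ G.Adj u v ∧ u ∈ A := by
    intro v hv
    rw [memA, greedy_iff] at hv
    push_neg at hv
    obtain ⟨u, h1, h2, h3⟩ := hv
    exact ⟨u, h1, h2, (memA u).2 h3⟩
  have hindep : Indep G A := by
    intro u hu v hv huv
    have hne : key u ≠ key v := fun h => G.ne_of_adj huv (gkey_inj X h)
    rcases hne.lt_or_gt with h | h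
    · exact ((greedy_iff G key v).mp ((memA v).1 hv)) u h huv ((memA u).1 hu)
    · exact ((greedy_iff G key u).mp ((memA u).1 hu)) v h huv.symm ((memA v).1 hv)
  have hmax : MaxIndep G A := by
    refine ⟨hindep, fun B hB hAB => Finset.Subset.antisymm hAB fun v hvB => ?_⟩
    by_contra hvA
    obtain ⟨u, _, hadj, huA⟩ := hnot v hvA
    exact hB u (hAB huA) v hvB hadj
  refine ⟨A, hmax, ?_, ?_⟩
  · -- A \ IntAct ⊆ X
    intro a ha
    rw [Finset.mem_sdiff] at ha
    obtain ⟨haA, haI⟩ := ha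
    by_contra haX
    rw [IntAct, Finset.mem_filter] at haI
    push_neg at haI
    obtain ⟨u, huS, hua⟩ := haI haA
    rw [Subs, Finset.mem_filter] at huS
    obtain ⟨-, hadj, hind⟩ := huS
    have hau : a < u := lt_of_le_of_ne hua (G.ne_of_adj hadj)
    have huA : u ∉ A := fun h => hindep a haA u h hadj
    obtain ⟨b, hbk, hbadj, hbA⟩ := hnot u huA
    have hba : b = a := by
      by_contra hba
      exact hind b (Finset.mem_insert_of_mem (Finset.mem_erase.mpr ⟨hba, hbA⟩)) u
        (Finset.mem_insert_self u _) hbadj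
    subst hba
    rcases gkey_lt X hbk with ⟨h1, h2⟩ | ⟨h1, h2, h3⟩ | ⟨h1, h2, h3⟩
    · exact haX h1
    · exact haX h1
    · exact absurd hau (not_lt.mpr h3.le)
  · -- X ⊆ A ∪ ExtAct
    intro x hxX
    rw [Finset.mem_union]
    by_cases hxA : x ∈ A
    · exact Or.inl hxA
    obtain ⟨a, hak, hadj, haA⟩ := hnot x hxA
    refine Or.inr ?_
    rw [ExtAct, Finset.mem_filter]
    refine ⟨Finset.mem_univ x, hxA, a, haA, hadj.symm, ?_⟩
    rcases gkey_lt X hak with ⟨h1, h2⟩ | ⟨h1, h2, h3⟩ | ⟨h1, h2, h3⟩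
    · exact absurd hxX h2
    · exact h3
    · exact absurd hxX h2
end

section
/- Every finite graph G with vertex set {1,...,n} contains an internally complete maximal independent set, i.e., a maximal independent set S with Int(S) = S. -/
open Finset

lemma indep_extend {n : ℕ} (G : SimpleGraph (Fin n)) [DecidableRel G.Adj]
    (A : Finset (Fin n)) (hA : Indep G A) : ∃ S, MaxIndep G S ∧ A ⊆ S := by
  classical
  obtain ⟨S, hS, hmax⟩ := Finset.exists_max_image
    ((univ : Finset (Finset (Fin n))).filter (fun B => Indep G B ∧ A ⊆ B))
    (fun B => B.card) ⟨A, by simp [hA]⟩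
  simp only [mem_filter, mem_univ, true_and] at hS hmax
  refine ⟨S, ⟨hS.1, fun B hB hSB => ?_⟩, hS.2⟩
  exact (Finset.eq_of_subset_of_card_le hSB
    (hmax B ⟨hB, hS.2.trans hSB⟩))

/-- Every graph contains an internally complete maximal independent set. -/
theorem exists_internally_complete (n : ℕ) (G : SimpleGraph (Fin n))
    [DecidableRel G.Adj] :
    ∃ S : Finset (Fin n), MaxIndep G S ∧ IntAct G S = S := by
  classical
  obtain ⟨S0, hS0, -⟩ := indep_extend G ∅ (by intro u hu; simp at hu)
  obtain ⟨S, hS, hmax⟩ := Finset.exists_max_image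
    ((univ : Finset (Finset (Fin n))).filter (fun B => MaxIndep G B))
    (fun B => ∑ v ∈ B, 2 ^ (v : ℕ)) ⟨S0, by simp [hS0]⟩
  simp only [mem_filter, mem_univ, true_and] at hS hmax
  refine ⟨S, hS, ?_⟩
  unfold IntAct
  apply Finset.filter_true_of_mem
  intro v hv u hu
  by_contra hlt
  simp only [Subs, mem_filter, mem_univ, true_and] at hu
  obtain ⟨hadj, hind⟩ := hu
  have hne : v ≠ u := G.ne_of_adj hadj
  have hvu : v < u := lt_of_le_of_ne (not_lt.mp hlt) hne
  have huS : u ∉ S := fun h => hS.1 v hv u h hadj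
  obtain ⟨T, hT, hsub⟩ := indep_extend G (insert u (S.erase v)) hind
  have h1 : ∑ x ∈ T, 2 ^ (x : ℕ) ≤ ∑ x ∈ S, 2 ^ (x : ℕ) := hmax T (by simp [hT])
  have h2 : ∑ x ∈ insert u (S.erase v), 2 ^ (x : ℕ) ≤ ∑ x ∈ T, 2 ^ (x : ℕ) :=
    Finset.sum_le_sum_of_subset hsub
  have h3 : ∑ x ∈ insert u (S.erase v), 2 ^ (x : ℕ)
      = 2 ^ (u : ℕ) + ∑ x ∈ S.erase v, 2 ^ (x : ℕ) :=
    Finset.sum_insert (by simp [huS])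
  have h4 : ∑ x ∈ S.erase v, 2 ^ (x : ℕ) + 2 ^ (v : ℕ) = ∑ x ∈ S, 2 ^ (x : ℕ) :=
    Finset.sum_erase_add _ _ hv
  have hpow : (2 : ℕ) ^ (v : ℕ) < 2 ^ (u : ℕ) :=
    Nat.pow_lt_pow_right (by norm_num) hvu
  omega
end

section
/- The greedy set obtained by repeatedly selecting the largest-labeled remaining vertex and deleting its closed neighborhood is an internally complete maximal independent set. -/
open Finset

/-- The greedy procedure: repeatedly pick the greatest remaining vertex and
delete its closed neighbourhood. -/
def greedyMax {n : ℕ} (G : SimpleGraph (Fin n)) [DecidableRel G.Adj]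
    (A : Finset (Fin n)) : Finset (Fin n) :=
  if h : A.Nonempty then
    insert (A.max' h) (greedyMax G (A.filter (fun u => u ≠ A.max' h ∧ ¬ G.Adj (A.max' h) u)))
  else ∅
termination_by A.card
decreasing_by
  have hv : A.max' h ∈ A := A.max'_mem h
  have hnot : A.max' h ∉ A.filter (fun u => u ≠ A.max' h ∧ ¬ G.Adj (A.max' h) u) := by
    simp
  exact Finset.card_lt_card ⟨Finset.filter_subset _ _, fun hs => hnot (hs hv)⟩


lemma greedy_spec {n : ℕ} (G : SimpleGraph (Fin n)) [DecidableRel G.Adj] :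
    ∀ A : Finset (Fin n), greedyMax G A ⊆ A ∧ Indep G (greedyMax G A) ∧
      ∀ u ∈ A, u ∈ greedyMax G A ∨ ∃ v ∈ greedyMax G A, G.Adj v u ∧ u < v := by
  intro A
  induction A using Finset.strongInductionOn with
  | _ A ih =>
    rw [greedyMax]
    by_cases h : A.Nonempty
    · simp only [dif_pos h]
      set m := A.max' h with hm
      set A' := A.filter (fun u => u ≠ m ∧ ¬ G.Adj m u) with hA'
      have hss : A' ⊂ A := by
        refine ⟨Finset.filter_subset _ _, fun hs => ?_⟩
        have := hs (A.max'_mem h)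
        simp [hA', hm] at this
      obtain ⟨h1, h2, h3⟩ := ih A' hss
      have hnadj : ∀ x ∈ greedyMax G A', ¬ G.Adj m x := by
        intro x hx
        have := h1 hx
        rw [hA', Finset.mem_filter] at this
        exact this.2.2
      refine ⟨?_, ?_, ?_⟩
      · intro x hx
        rcases Finset.mem_insert.mp hx with rfl | hx
        · exact A.max'_mem h
        · exact Finset.filter_subset _ _ (h1 hx)
      · intro u hu v hv
        rcases Finset.mem_insert.mp hu with rfl | hu <;>
          rcases Finset.mem_insert.mp hv with rfl | hv
        · exact G.irrefl
        · exact hnadj v hv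
        · intro hadj; exact hnadj u hu (G.adj_symm hadj)
        · exact h2 u hu v hv
      · intro u hu
        by_cases hum : u = m
        · exact Or.inl (by simp [hum])
        by_cases hadj : G.Adj m u
        · refine Or.inr ⟨m, Finset.mem_insert_self _ _, hadj, ?_⟩
          exact lt_of_le_of_ne (A.le_max' u hu) hum
        · have hu' : u ∈ A' := by simp [hA', hu, hum, hadj]
          rcases h3 u hu' with h | ⟨v, hv, hvu, huv⟩
          · exact Or.inl (Finset.mem_insert_of_mem h)
          · exact Or.inr ⟨v, Finset.mem_insert_of_mem hv, hvu, huv⟩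
    · simp only [dif_neg h]
      exact ⟨Finset.empty_subset _, fun u hu => absurd hu (Finset.notMem_empty u),
        fun u hu => absurd ⟨u, hu⟩ h⟩

/-- The max-greedy set is an internally complete maximal independent set. -/
theorem greedyMax_internally_complete (n : ℕ) (G : SimpleGraph (Fin n))
    [DecidableRel G.Adj] :
    MaxIndep G (greedyMax G Finset.univ) ∧
      IntAct G (greedyMax G Finset.univ) = greedyMax G Finset.univ := by
  obtain ⟨hsub, hind, hdom⟩ := greedy_spec G (univ : Finset (Fin n))
  set S := greedyMax G (univ : Finset (Fin n)) with hS
  have hdom' : ∀ u : Fin n, u ∈ S ∨ ∃ v ∈ S, G.Adj v u ∧ u < v :=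
    fun u => hdom u (Finset.mem_univ u)
  constructor
  · refine ⟨hind, fun B hB hSB => ?_⟩
    apply Finset.Subset.antisymm hSB
    intro u hu
    rcases hdom' u with h | ⟨v, hv, hvu, _⟩
    · exact h
    · exact absurd hvu (hB v (hSB hv) u hu)
  · apply Finset.filter_true_of_mem
    intro v hv u hu
    rw [Subs, Finset.mem_filter] at hu
    obtain ⟨-, hadj, hind'⟩ := hu
    by_contra hlt
    push_neg at hlt
    have hne : u ≠ v := fun h => G.irrefl (h ▸ hadj)
    have hvu : v < u := lt_of_le_of_ne hlt (Ne.symm hne)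
    rcases hdom' u with h | ⟨w, hw, hwu, huw⟩
    · exact hind v hv u h hadj
    · have hwv : w ≠ v := fun h => absurd huw (by rw [h]; exact not_lt.mpr hvu.le)
      exact hind' w (Finset.mem_insert_of_mem (Finset.mem_erase.mpr ⟨hwv, hw⟩))
        u (Finset.mem_insert_self _ _) hwu
end

section
/- For every vertex v of a graph G there exists a maximal independent set A containing v such that either A \ Int(A) = {v} or Int(A) = A. -/
open Finset

lemma exists_maximal_superset {n : ℕ} (G : SimpleGraph (Fin n)) [DecidableRel G.Adj]
    (A : Finset (Fin n)) (hA : Indep G A) : ∃ B, MaxIndep G B ∧ A ⊆ B := by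
  classical
  set S := (univ : Finset (Fin n)).powerset.filter (fun B => Indep G B ∧ A ⊆ B) with hS
  have hAS : A ∈ S := by
    simp [hS, Finset.mem_filter, Finset.mem_powerset, hA]
  obtain ⟨B, hBS, hBmax⟩ := S.exists_max_image (fun B => B.card) ⟨A, hAS⟩
  rw [hS, Finset.mem_filter] at hBS
  refine ⟨B, ⟨hBS.2.1, ?_⟩, hBS.2.2⟩
  intro C hC hBC
  have hCS : C ∈ S := by
    simp [hS, Finset.mem_filter, Finset.mem_powerset, hC, hBS.2.2.trans hBC]
  exact Finset.eq_of_subset_of_card_le hBC (hBmax C hCS)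

/-- Every vertex lies in a maximal independent set whose set of non-internally
active vertices is either exactly that vertex or empty. -/
theorem exists_maxIndep_int_structure (n : ℕ) (G : SimpleGraph (Fin n))
    [DecidableRel G.Adj] (v : Fin n) :
    ∃ A : Finset (Fin n), MaxIndep G A ∧ v ∈ A ∧
      (A \ IntAct G A = {v} ∨ IntAct G A = A) := by
  classical
  have hv : Indep G ({v} : Finset (Fin n)) := by
    intro a ha b hb
    simp only [Finset.mem_singleton] at ha hb
    subst ha; subst hb
    exact G.irrefl
  set S := (univ : Finset (Fin n)).powerset.filter (fun B => MaxIndep G B ∧ v ∈ B) with hS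
  have hSne : S.Nonempty := by
    obtain ⟨B, hB, hvB⟩ := exists_maximal_superset G {v} hv
    exact ⟨B, by simp [hS, Finset.mem_filter, Finset.mem_powerset, hB,
      hvB (Finset.mem_singleton_self v)]⟩
  obtain ⟨A, hAS, hAmax⟩ := S.exists_max_image (fun B => ∑ x ∈ B, (x : ℕ)) hSne
  rw [hS, Finset.mem_filter] at hAS
  obtain ⟨-, hAmi, hvA⟩ := hAS
  refine ⟨A, hAmi, hvA, ?_⟩
  have hsub : A \ IntAct G A ⊆ {v} := by
    intro a ha
    rw [Finset.mem_sdiff] at ha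
    obtain ⟨haA, haI⟩ := ha
    by_contra hav
    rw [Finset.mem_singleton] at hav
    have : ∃ w ∈ Subs G A a, ¬ w < a := by
      by_contra h
      push_neg at h
      exact haI (Finset.mem_filter.2 ⟨haA, h⟩)
    obtain ⟨w, hwS, hwa⟩ := this
    rw [Subs, Finset.mem_filter] at hwS
    obtain ⟨-, hadj, hind⟩ := hwS
    have hwne : w ≠ a := fun h => G.irrefl (h ▸ hadj)
    have haw : a < w := lt_of_le_of_ne (not_lt.1 hwa) (Ne.symm hwne)
    have hwA : w ∉ A := fun hwA => (hAmi.1 a haA w hwA) hadj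
    obtain ⟨B, hBmi, hB'⟩ := exists_maximal_superset G (insert w (A.erase a)) hind
    have hvB : v ∈ B := hB' (Finset.mem_insert_of_mem (Finset.mem_erase.2 ⟨Ne.symm hav, hvA⟩))
    have hBS : B ∈ S := by
      simp [hS, Finset.mem_filter, Finset.mem_powerset, hBmi, hvB]
    have hle : ∑ x ∈ B, (x : ℕ) ≤ ∑ x ∈ A, (x : ℕ) := hAmax B hBS
    have hwe : w ∉ A.erase a := fun h => hwA (Finset.mem_of_mem_erase h)
    have h1 : ∑ x ∈ insert w (A.erase a), (x : ℕ) = (w : ℕ) + ∑ x ∈ A.erase a, (x : ℕ) :=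
      Finset.sum_insert hwe
    have h2 : (a : ℕ) + ∑ x ∈ A.erase a, (x : ℕ) = ∑ x ∈ A, (x : ℕ) :=
      Finset.add_sum_erase A (fun x => (x : ℕ)) haA
    have hlt : ∑ x ∈ A, (x : ℕ) < ∑ x ∈ insert w (A.erase a), (x : ℕ) := by
      rw [h1, ← h2]
      exact Nat.add_lt_add_right haw _
    have hle2 : ∑ x ∈ insert w (A.erase a), (x : ℕ) ≤ ∑ x ∈ B, (x : ℕ) :=
      Finset.sum_le_sum_of_subset hB'
    omega
  rcases Finset.subset_singleton_iff.1 hsub with h | h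
  · right
    have h1 : A ⊆ IntAct G A := by
      intro a ha
      by_contra hna
      have : a ∈ A \ IntAct G A := Finset.mem_sdiff.2 ⟨ha, hna⟩
      simp [h] at this
    exact Finset.Subset.antisymm (Finset.filter_subset _ _) h1
  · exact Or.inl h
end

section
/- If G has a vertex v such that the induced subgraph G[V \ N[v]] has an isolated vertex, then every maximal independent set A containing v satisfies Int(A) ≠ ∅. -/
open Finset

/-- If `G[V \ N[v]]` has an isolated vertex then every maximal independent set
containing `v` has a nonempty set of internally active vertices. -/
theorem int_nonempty_of_isolated (n : ℕ) (G : SimpleGraph (Fin n)) [DecidableRel G.Adj]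
    (v : Fin n)
    (hiso : ∃ w : Fin n, w ≠ v ∧ ¬ G.Adj v w ∧ ∀ u, G.Adj w u → u = v ∨ G.Adj v u) :
    ∀ A : Finset (Fin n), MaxIndep G A → v ∈ A → IntAct G A ≠ ∅ := by
  obtain ⟨w, hwv, hvw, hw⟩ := hiso
  rintro A ⟨hInd, hMax⟩ hvA
  have hnbr : ∀ u ∈ A, ¬ G.Adj w u := by
    intro u hu hadj
    rcases hw u hadj with rfl | h
    · exact hvw (G.adj_symm hadj)
    · exact hInd v hvA u hu h
  have hwA : w ∈ A := by
    by_contra hwA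
    have hind : Indep G (insert w A) := by
      intro a ha b hb hab
      rcases Finset.mem_insert.mp ha with ha | ha
      · rcases Finset.mem_insert.mp hb with hb | hb
        · exact G.loopless.irrefl _ (ha ▸ hb ▸ hab)
        · exact hnbr b hb (ha ▸ hab)
      · rcases Finset.mem_insert.mp hb with hb | hb
        · exact hnbr a ha (G.adj_symm (hb ▸ hab))
        · exact hInd a ha b hb hab
    have hEq := hMax _ hind (Finset.subset_insert _ _)
    have : w ∈ A := by rw [hEq]; exact Finset.mem_insert_self w A
    exact hwA this
  intro hempty
  have hwInt : w ∈ IntAct G A := by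
    refine Finset.mem_filter.mpr ⟨hwA, ?_⟩
    intro u hu
    exfalso
    rw [Subs, Finset.mem_filter] at hu
    obtain ⟨-, hadj, hind⟩ := hu
    rcases hw u hadj with rfl | h
    · exact hvw (G.adj_symm hadj)
    · have hvA' : v ∈ insert u (A.erase w) :=
        Finset.mem_insert.mpr (Or.inr (Finset.mem_erase.mpr ⟨hwv.symm, hvA⟩))
      exact hind u (Finset.mem_insert_self _ _) v hvA' (G.adj_symm h)
  rw [hempty] at hwInt
  exact absurd hwInt (Finset.notMem_empty w)
end

section
/- Let A and B be two distinct maximal independent sets of a graph G. Setting M = A \ B and N = B \ A, one has B = (A \ M) ∪ N, M ∩ N = ∅, and either N ∩ Ext(A) ≠ ∅ or M ∩ Ext(B) ≠ ∅. -/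
open Finset

lemma maxIndep_dom {n : ℕ} {G : SimpleGraph (Fin n)} {A : Finset (Fin n)}
    (hA : MaxIndep G A) {v : Fin n} (hv : v ∉ A) : ∃ a ∈ A, G.Adj v a := by
  by_contra h
  push_neg at h
  have hind : Indep G (insert v A) := by
    intro u hu w hw
    simp only [mem_insert] at hu hw
    rcases hu with rfl | hu <;> rcases hw with rfl | hw
    · exact G.loopless.irrefl _
    · exact h w hw
    · intro hadj; exact h u hu hadj.symm
    · exact hA.1 u hu w hw
  have := hA.2 _ hind (subset_insert _ _)
  exact hv (this ▸ mem_insert_self v A)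

lemma key_lemma {n : ℕ} {G : SimpleGraph (Fin n)} [DecidableRel G.Adj]
    {A B : Finset (Fin n)} (hA : MaxIndep G A) (hB : MaxIndep G B)
    {w : Fin n} (hw : w ∈ B \ A) (hmax : ∀ x ∈ (A \ B) ∪ (B \ A), x ≤ w) :
    w ∈ (B \ A) ∩ ExtAct G A := by
  have hwB := (mem_sdiff.mp hw).1
  have hwA := (mem_sdiff.mp hw).2
  obtain ⟨a, haA, hadj⟩ := maxIndep_dom hA hwA
  have haB : a ∉ B := fun haB => hB.1 w hwB a haB hadj
  have haS : a ∈ (A \ B) ∪ (B \ A) := mem_union_left _ (mem_sdiff.mpr ⟨haA, haB⟩)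
  have hlt : a < w := lt_of_le_of_ne (hmax a haS) (fun h => hwA (h ▸ haA))
  exact mem_inter.mpr ⟨hw, mem_filter.mpr ⟨mem_univ _, hwA, a, haA, hadj, hlt⟩⟩

/-- Two distinct maximal independent sets differ by unique disjoint sets
`M = A \ B` and `N = B \ A`, and moreover either `N` meets `ExtAct A` or `M`
meets `ExtAct B`. -/
theorem maxIndep_exchange (n : ℕ) (G : SimpleGraph (Fin n)) [DecidableRel G.Adj]
    (A B : Finset (Fin n)) (hA : MaxIndep G A) (hB : MaxIndep G B) (hne : A ≠ B) :
    B = (A \ (A \ B)) ∪ (B \ A) ∧ Disjoint (A \ B) (B \ A) ∧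
      (((B \ A) ∩ ExtAct G A).Nonempty ∨ ((A \ B) ∩ ExtAct G B).Nonempty) := by
  
  refine ⟨?_, ?_, ?_⟩
  · ext x
    simp only [mem_union, mem_sdiff]
    tauto
  · exact disjoint_sdiff_sdiff
  · have hS : ((A \ B) ∪ (B \ A)).Nonempty := by
      rw [nonempty_iff_ne_empty]
      intro h
      apply hne
      ext x
      have h1 : x ∉ (A \ B) ∪ (B \ A) := h ▸ notMem_empty x
      simp only [mem_union, mem_sdiff] at h1
      tauto
    set w := ((A \ B) ∪ (B \ A)).max' hS with hwdef
    have hwmem := max'_mem ((A \ B) ∪ (B \ A)) hS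
    have hmax : ∀ x ∈ (A \ B) ∪ (B \ A), x ≤ w := fun x hx => le_max' _ x hx
    rcases mem_union.mp hwmem with hw | hw
    · exact Or.inr ⟨w, key_lemma hB hA hw (by
        intro x hx
        exact hmax x (by rwa [union_comm] at hx))⟩
    · exact Or.inl ⟨w, key_lemma hA hB hw hmax⟩
end

section
/- For the join G = K_n + E_m, with V(K_n) = {1,...,n} and V(E_m) = {n+1,...,n+m}, the intervals generated by the maximal independent sets form a partition of 2^V: {i} generates [{i}; {i,...,n+m}] for 1 ≤ i ≤ n, and V(E_m) generates [∅; {n+1,...,n+m}]. -/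
open Finset

/-- The join of the complete graph on `{1,…,n}` with the empty graph on
`{n+1,…,n+m}`. -/
def joinKE (n m : ℕ) : SimpleGraph (Fin (n + m)) where
  Adj u v := u ≠ v ∧ ((u : ℕ) < n ∨ (v : ℕ) < n)
  symm := by
    constructor
    intro u v h
    exact ⟨h.1.symm, h.2.symm⟩
  loopless := by
    constructor
    intro u h
    exact h.1 rfl

instance (n m : ℕ) : DecidableRel (joinKE n m).Adj := fun u v =>
  inferInstanceAs (Decidable (u ≠ v ∧ ((u : ℕ) < n ∨ (v : ℕ) < n)))


section Aux
variable {n m : ℕ}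

lemma singleton_max {i : Fin (n + m)} (hi : (i : ℕ) < n) :
    MaxIndep (joinKE n m) {i} := by
  constructor
  · intro u hu v hv
    simp only [mem_singleton] at hu hv
    subst hu; subst hv
    exact (joinKE n m).loopless.irrefl _
  · intro B hB hsub
    refine Finset.Subset.antisymm hsub (fun u hu => ?_)
    simp only [mem_singleton]
    by_contra hne
    exact hB i (hsub (mem_singleton_self i)) u hu ⟨fun h => hne h.symm, Or.inl hi⟩

lemma S_max (hm : 0 < m) :
    MaxIndep (joinKE n m) (univ.filter (fun u : Fin (n + m) => n ≤ (u : ℕ))) := by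
  constructor
  · intro u hu v hv hadj
    simp only [mem_filter, mem_univ, true_and] at hu hv
    rcases hadj.2 with h | h <;> omega
  · intro B hB hsub
    refine Finset.Subset.antisymm hsub (fun u hu => ?_)
    simp only [mem_filter, mem_univ, true_and]
    by_contra h
    push_neg at h
    have hw : (⟨n, by omega⟩ : Fin (n + m)) ∈ B := by
      apply hsub; simp
    refine hB u hu _ hw ⟨?_, Or.inl h⟩
    intro he
    have := congrArg Fin.val he
    simp at this; omega

lemma max_classify (hm : 0 < m) (A : Finset (Fin (n + m))) :
    MaxIndep (joinKE n m) A ↔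
      ((∃ i : Fin (n + m), (i : ℕ) < n ∧ A = {i}) ∨
        A = univ.filter (fun u : Fin (n + m) => n ≤ (u : ℕ))) := by
  constructor
  · rintro ⟨hI, hM⟩
    by_cases h : ∃ v ∈ A, (v : ℕ) < n
    · obtain ⟨v, hv, hvn⟩ := h
      left
      refine ⟨v, hvn, Finset.Subset.antisymm (fun u hu => ?_) (singleton_subset_iff.mpr hv)⟩
      simp only [mem_singleton]
      by_contra hne
      exact hI v hv u hu ⟨fun h => hne h.symm, Or.inl hvn⟩
    · push_neg at h
      right
      apply hM
      · exact (S_max hm).1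
      · intro u hu
        simp only [mem_filter, mem_univ, true_and]
        exact h u hu
  · rintro (⟨i, hi, rfl⟩ | rfl)
    · exact singleton_max hi
    · exact S_max hm

lemma ext_singleton {i : Fin (n + m)} (hi : (i : ℕ) < n) :
    ({i} : Finset (Fin (n + m))) ∪ ExtAct (joinKE n m) {i} =
      univ.filter (fun u => i ≤ u) := by
  ext v
  simp only [ExtAct, mem_union, mem_singleton, mem_filter, mem_univ, true_and]
  constructor
  · rintro (rfl | ⟨hne, a, ha, hadj, hlt⟩)
    · exact le_refl v
    · subst ha
      exact le_of_lt hlt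
  · intro hle
    rcases eq_or_lt_of_le hle with he | hlt
    · left; exact he.symm
    · right
      exact ⟨ne_of_gt hlt, i, rfl, ⟨ne_of_gt hlt, Or.inr hi⟩, hlt⟩

lemma int_singleton (hm : 0 < m) {i : Fin (n + m)} (hi : (i : ℕ) < n) :
    IntAct (joinKE n m) {i} = ∅ := by
  rw [IntAct, filter_eq_empty_iff]
  intro v hv hall
  simp only [mem_singleton] at hv; subst hv
  have hmem : (⟨n, by omega⟩ : Fin (n + m)) ∈ Subs (joinKE n m) {v} v := by
    refine mem_filter.mpr ⟨mem_univ _, ⟨?_, Or.inl hi⟩, ?_⟩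
    · intro he
      have := congrArg Fin.val he
      simp at this; omega
    · intro a ha b hb hadj
      rw [erase_singleton] at ha hb
      simp only [LawfulSingleton.insert_empty_eq, mem_singleton] at ha hb
      subst ha; subst hb
      exact (joinKE n m).loopless.irrefl _ hadj
  have := hall _ hmem
  rw [Fin.lt_def] at this
  simp at this; omega

lemma ext_S :
    ExtAct (joinKE n m) (univ.filter (fun u : Fin (n + m) => n ≤ (u : ℕ))) = ∅ := by
  rw [ExtAct, filter_eq_empty_iff]
  rintro v - ⟨hv, a, ha, hadj, hlt⟩
  simp only [mem_filter, mem_univ, true_and] at ha hv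
  rw [Fin.lt_def] at hlt
  omega

lemma int_S :
    IntAct (joinKE n m) (univ.filter (fun u : Fin (n + m) => n ≤ (u : ℕ))) =
      univ.filter (fun u : Fin (n + m) => n ≤ (u : ℕ)) := by
  rw [IntAct, filter_eq_self]
  intro v hv u hu
  simp only [mem_filter, mem_univ, true_and] at hv
  obtain ⟨hadj, -⟩ := (mem_filter.mp hu).2
  rcases hadj.2 with h | h
  · omega
  · rw [Fin.lt_def]; omega

end Aux

/-- For the join `K_n + E_m` the intervals generated by the maximal independent
sets form a partition: `{i}` generates `[{i}; {i,…,n+m}]` for `i ≤ n`, and the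
independent part generates `[∅; {n+1,…,n+m}]`. -/
theorem join_complete_empty_partition (n m : ℕ) (hn : 0 < n) (hm : 0 < m) :
    (⋃ A ∈ {A : Finset (Fin (n + m)) | MaxIndep (joinKE n m) A},
        Itv (A \ IntAct (joinKE n m) A) (A ∪ ExtAct (joinKE n m) A)) = Set.univ ∧
    ({A : Finset (Fin (n + m)) | MaxIndep (joinKE n m) A}.PairwiseDisjoint
        (fun A => Itv (A \ IntAct (joinKE n m) A) (A ∪ ExtAct (joinKE n m) A))) ∧
    (∀ i : Fin (n + m), (i : ℕ) < n →
        MaxIndep (joinKE n m) {i} ∧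
        ({i} : Finset (Fin (n + m))) \ IntAct (joinKE n m) {i} = {i} ∧
        ({i} : Finset (Fin (n + m))) ∪ ExtAct (joinKE n m) {i} =
          univ.filter (fun u => i ≤ u)) ∧
    (MaxIndep (joinKE n m) (univ.filter (fun u : Fin (n + m) => n ≤ (u : ℕ))) ∧
      (univ.filter (fun u : Fin (n + m) => n ≤ (u : ℕ))) \ IntAct (joinKE n m) (univ.filter (fun u : Fin (n + m) => n ≤ (u : ℕ))) = ∅ ∧
      (univ.filter (fun u : Fin (n + m) => n ≤ (u : ℕ))) ∪
          ExtAct (joinKE n m) (univ.filter (fun u : Fin (n + m) => n ≤ (u : ℕ))) =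
        univ.filter (fun u : Fin (n + m) => n ≤ (u : ℕ))) := by

  have hitv_single : ∀ i : Fin (n + m), (i : ℕ) < n →
      Itv (({i} : Finset (Fin (n + m))) \ IntAct (joinKE n m) {i})
        ({i} ∪ ExtAct (joinKE n m) {i}) =
      Itv {i} (univ.filter (fun u => i ≤ u)) := by
    intro i hi
    rw [int_singleton hm hi, ext_singleton hi, sdiff_empty]
  have hitv_S :
      Itv ((univ.filter (fun u : Fin (n + m) => n ≤ (u : ℕ))) \
          IntAct (joinKE n m) (univ.filter (fun u : Fin (n + m) => n ≤ (u : ℕ))))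
        ((univ.filter (fun u : Fin (n + m) => n ≤ (u : ℕ))) ∪
          ExtAct (joinKE n m) (univ.filter (fun u : Fin (n + m) => n ≤ (u : ℕ)))) =
      Itv ∅ (univ.filter (fun u : Fin (n + m) => n ≤ (u : ℕ))) := by
    rw [int_S, ext_S, sdiff_self, union_empty]
    rfl
  refine ⟨?_, ?_, ?_, ?_⟩
  · apply Set.eq_univ_of_forall
    intro X
    simp only [Set.mem_iUnion, Set.mem_setOf_eq]
    by_cases h : ∃ v ∈ X, (v : ℕ) < n
    · obtain ⟨v, hvX, hvn⟩ := h
      have hT : (X.filter (fun v : Fin (n + m) => (v : ℕ) < n)).Nonempty :=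
        ⟨v, mem_filter.mpr ⟨hvX, hvn⟩⟩
      set i := (X.filter (fun v : Fin (n + m) => (v : ℕ) < n)).min' hT with hidef
      have himem := (X.filter (fun v : Fin (n + m) => (v : ℕ) < n)).min'_mem hT
      have hiX : i ∈ X := (mem_filter.mp himem).1
      have hin : (i : ℕ) < n := (mem_filter.mp himem).2
      refine ⟨{i}, singleton_max hin, ?_⟩
      rw [hitv_single i hin]
      refine ⟨singleton_subset_iff.mpr hiX, fun x hx => ?_⟩
      simp only [mem_filter, mem_univ, true_and]
      by_cases hxn : (x : ℕ) < n
      · exact min'_le _ x (mem_filter.mpr ⟨hx, hxn⟩)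
      · rw [Fin.le_def]; omega
    · push_neg at h
      refine ⟨_, S_max hm, ?_⟩
      rw [hitv_S]
      exact ⟨empty_subset X, fun x hx =>
        mem_filter.mpr ⟨mem_univ x, h x hx⟩⟩
  · intro A hA B hB hne
    rw [Set.mem_setOf_eq, max_classify hm] at hA hB
    rw [Function.onFun, Set.disjoint_left]
    intro X hXA hXB
    rcases hA with ⟨i, hi, rfl⟩ | rfl
    · rw [hitv_single i hi] at hXA
      obtain ⟨hiX, hXsub⟩ := hXA
      have hiX' : i ∈ X := singleton_subset_iff.mp hiX
      rcases hB with ⟨j, hj, rfl⟩ | rfl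
      · rw [hitv_single j hj] at hXB
        obtain ⟨hjX, hXsub'⟩ := hXB
        have hjX' : j ∈ X := singleton_subset_iff.mp hjX
        have h1 : i ≤ j := by
          have := hXsub hjX'
          simpa using this
        have h2 : j ≤ i := by
          have := hXsub' hiX'
          simpa using this
        exact hne (by rw [le_antisymm h1 h2])
      · rw [hitv_S] at hXB
        have := hXB.2 hiX'
        simp only [mem_filter, mem_univ, true_and] at this
        omega
    · rw [hitv_S] at hXA
      rcases hB with ⟨j, hj, rfl⟩ | rfl
      · rw [hitv_single j hj] at hXB
        have hjX' : j ∈ X := singleton_subset_iff.mp hXB.1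
        have := hXA.2 hjX'
        simp only [mem_filter, mem_univ, true_and] at this
        omega
      · exact hne rfl
  · intro i hi
    exact ⟨singleton_max hi, by rw [int_singleton hm hi, sdiff_empty], ext_singleton hi⟩
  · exact ⟨S_max hm, by rw [int_S]; simp, by rw [ext_S, union_empty]⟩
end

section
/- For any lex graph L(n,m), the intervals [A \ Int(A); A ∪ Ext(A)] over all maximal independent sets A form a partition of 2^{[n]}. -/
open Finset

/-- The lexicographic rank (0-indexed) of the pair `{a,b}` with `a < b` among
the 2-element subsets of `{0,…,n-1}`. -/
def lexRank (n a b : ℕ) : ℕ :=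
  a * (n - 1) - a * (a - 1) / 2 + (b - a - 1)

/-- The lex graph `L(n,m)`: vertex set `{0,…,n-1}`, edges the first `m` pairs
in lexicographic order. -/
def lexGraph (n m : ℕ) : SimpleGraph (Fin n) where
  Adj u v := u ≠ v ∧ lexRank n (min (u : ℕ) (v : ℕ)) (max (u : ℕ) (v : ℕ)) < m
  symm := by
    constructor
    intro u v h
    exact ⟨h.1.symm, by rw [min_comm, max_comm]; exact h.2⟩
  loopless := by
    constructor
    intro u h
    exact h.1 rfl

instance (n m : ℕ) : DecidableRel (lexGraph n m).Adj := fun u v =>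
  inferInstanceAs (Decidable (u ≠ v ∧ lexRank n (min (u : ℕ) (v : ℕ)) (max (u : ℕ) (v : ℕ)) < m))

private def F (n a : ℕ) : ℕ := lexRank n a (a+1)

private lemma lexRank_eq (n a b : ℕ) : lexRank n a b = F n a + (b - a - 1) := by
  unfold F lexRank; omega

private lemma F_succ {n a : ℕ} (h : a + 1 ≤ n - 1) : F n (a+1) = F n a + (n - 1 - a) := by
  unfold F lexRank
  have h1 : (a+1) * (n-1) = a * (n-1) + (n-1) := by ring
  have h2 : (a+1) * ((a+1)-1) = a * (a-1) + 2*a := by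
    cases a with
    | zero => simp
    | succ b => simp; ring
  have h3 : a * (a-1) % 2 = 0 := by
    cases a with
    | zero => simp
    | succ b =>
      simp only [Nat.add_sub_cancel]
      exact Nat.even_iff.mp (by rw [Nat.mul_comm]; exact Nat.even_mul_succ_self b)
  have h4 : a * (a-1) ≤ a * (n-1) := Nat.mul_le_mul_left a (by omega)
  omega

private lemma F_zero (n : ℕ) : F n 0 = 0 := by unfold F lexRank; simp

private lemma F_mono {n a b : ℕ} (hab : a ≤ b) (hb : b ≤ n - 1) : F n a ≤ F n b := by
  induction b with
  | zero => rw [Nat.le_zero.mp hab]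
  | succ k ih =>
    rcases Nat.eq_or_lt_of_le hab with rfl | h
    · exact le_refl _
    · have := ih (by omega) (by omega)
      rw [F_succ hb]
      omega


private def dd (n m : ℕ) : ℕ :=
  Nat.find (p := fun a => a = n - 1 ∨ m < F n (a+1)) ⟨n-1, Or.inl rfl⟩

private def tt (n m : ℕ) : ℕ := min (m - F n (dd n m)) (n - 1 - dd n m)

private lemma dd_le (n m : ℕ) : dd n m ≤ n - 1 :=
  Nat.find_min' _ (Or.inl rfl)

private lemma dd_spec (n m : ℕ) : dd n m = n - 1 ∨ m < F n (dd n m + 1) :=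
  Nat.find_spec (p := fun a => a = n - 1 ∨ m < F n (a+1)) ⟨n-1, Or.inl rfl⟩

private lemma lt_dd {n m a : ℕ} (h : a < dd n m) : a ≠ n - 1 ∧ F n (a+1) ≤ m := by
  have := Nat.find_min (p := fun a => a = n - 1 ∨ m < F n (a+1)) ⟨n-1, Or.inl rfl⟩ h
  exact ⟨fun hh => this (Or.inl hh), le_of_not_gt fun hh => this (Or.inr hh)⟩

private lemma F_dd_le (n m : ℕ) : F n (dd n m) ≤ m := by
  cases h : dd n m with
  | zero => rw [F_zero]; exact Nat.zero_le m
  | succ k => exact (lt_dd (by omega)).2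

private lemma tt_le (n m : ℕ) : tt n m ≤ n - 1 - dd n m := min_le_right _ _

private lemma adj_lt {n m : ℕ} {u v : Fin n} (huv : (u:ℕ) < v) :
    (lexGraph n m).Adj u v ↔
      ((u:ℕ) < dd n m ∨ ((u:ℕ) = dd n m ∧ (v:ℕ) ≤ dd n m + tt n m)) := by
  have hv : (v:ℕ) < n := v.isLt
  have hne : u ≠ v := fun h => by rw [h] at huv; omega
  have hmin : min (u:ℕ) (v:ℕ) = u := Nat.min_eq_left huv.le
  have hmax : max (u:ℕ) (v:ℕ) = v := Nat.max_eq_right huv.le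
  show (u ≠ v ∧ _) ↔ _
  rw [hmin, hmax, lexRank_eq]
  have hiff : F n (u:ℕ) + ((v:ℕ) - u - 1) < m ↔
      ((u:ℕ) < dd n m ∨ ((u:ℕ) = dd n m ∧ (v:ℕ) ≤ dd n m + tt n m)) := by
    have hd1 : dd n m ≤ n - 1 := dd_le n m
    have hFd : F n (dd n m) ≤ m := F_dd_le n m
    have ht : tt n m = min (m - F n (dd n m)) (n - 1 - dd n m) := rfl
    rcases lt_trichotomy (u:ℕ) (dd n m) with h | h | h
    · have hF1 : F n ((u:ℕ)+1) ≤ m := (lt_dd h).2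
      have hF2 : F n ((u:ℕ)+1) = F n (u:ℕ) + (n - 1 - u) := F_succ (by omega)
      omega
    · rw [h]
      omega
    · have hdne : dd n m ≠ n - 1 := by omega
      have hm : m < F n (dd n m + 1) := (dd_spec n m).resolve_left hdne
      have hmono : F n (dd n m + 1) ≤ F n (u:ℕ) := F_mono (by omega) (by omega)
      omega
  constructor
  · intro h; exact hiff.mp h.2
  · intro h; exact ⟨hne, hiff.mpr h⟩

private lemma adj_iff {n m : ℕ} (u v : Fin n) :
    (lexGraph n m).Adj u v ↔
      (((u:ℕ) < v ∧ ((u:ℕ) < dd n m ∨ ((u:ℕ) = dd n m ∧ (v:ℕ) ≤ dd n m + tt n m))) ∨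
       ((v:ℕ) < u ∧ ((v:ℕ) < dd n m ∨ ((v:ℕ) = dd n m ∧ (u:ℕ) ≤ dd n m + tt n m)))) := by
  rcases lt_trichotomy (u:ℕ) (v:ℕ) with h | h | h
  · rw [adj_lt h]; omega
  · have : u = v := Fin.ext h
    subst this
    simp [SimpleGraph.irrefl]
  · rw [(lexGraph n m).adj_comm, adj_lt h]; omega


/- ## Structure of maximal independent sets of the lex graph -/

private def A1 (n m : ℕ) : Finset (Fin n) :=
  univ.filter (fun w => (w:ℕ) = dd n m ∨ dd n m + tt n m < (w:ℕ))

private def A2 (n m : ℕ) : Finset (Fin n) :=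
  univ.filter (fun w => dd n m < (w:ℕ))

private lemma mem_A1 {n m : ℕ} {w : Fin n} :
    w ∈ A1 n m ↔ ((w:ℕ) = dd n m ∨ dd n m + tt n m < (w:ℕ)) := by
  simp [A1]

private lemma mem_A2 {n m : ℕ} {w : Fin n} :
    w ∈ A2 n m ↔ dd n m < (w:ℕ) := by
  simp [A2]

private lemma indep_of_gt {n m : ℕ} {S : Finset (Fin n)}
    (h : ∀ x ∈ S, dd n m + tt n m ≤ (x:ℕ)) : Indep (lexGraph n m) S := by
  intro a ha b hb hadj
  rw [adj_iff] at hadj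
  have ha' := h a ha
  have hb' := h b hb
  omega

private lemma maxIndep_singleton {n m : ℕ} {v : Fin n} (hvd : (v:ℕ) < dd n m) :
    MaxIndep (lexGraph n m) {v} := by
  constructor
  · intro a ha b hb hadj
    simp only [mem_singleton] at ha hb
    subst ha; subst hb
    exact (lexGraph n m).irrefl hadj
  · intro B hB hsub
    ext w
    refine ⟨fun h => hsub h, fun hw => ?_⟩
    rw [mem_singleton]
    by_contra hne
    have hne' : (w:ℕ) ≠ (v:ℕ) := fun h => hne (Fin.ext h)
    exact hB v (hsub (mem_singleton_self v)) w hw ((adj_iff v w).mpr (by omega))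

private lemma indep_A1 {n m : ℕ} : Indep (lexGraph n m) (A1 n m) := by
  intro a ha b hb hadj
  rw [mem_A1] at ha hb
  rw [adj_iff] at hadj
  have h1 := tt_le n m
  omega

private lemma maxIndep_A1 {n m : ℕ} (hn : 0 < n) : MaxIndep (lexGraph n m) (A1 n m) := by
  have hdn : dd n m < n := by have := dd_le n m; omega
  refine ⟨indep_A1, fun B hB hsub => ?_⟩
  ext w
  refine ⟨fun h => hsub h, fun hw => ?_⟩
  by_contra hnw
  rw [mem_A1] at hnw
  push_neg at hnw
  set e : Fin n := ⟨dd n m, hdn⟩ with he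
  have he' : (e:ℕ) = dd n m := rfl
  have heA : e ∈ A1 n m := mem_A1.mpr (Or.inl rfl)
  exact hB w hw e (hsub heA) ((adj_iff w e).mpr (by omega))

private lemma indep_A2 {n m : ℕ} : Indep (lexGraph n m) (A2 n m) := by
  intro a ha b hb hadj
  rw [mem_A2] at ha hb
  rw [adj_iff] at hadj
  omega

private lemma maxIndep_A2 {n m : ℕ} (ht : tt n m ≠ 0) :
    MaxIndep (lexGraph n m) (A2 n m) := by
  have h1 := tt_le n m
  have h2 := dd_le n m
  have hdn : dd n m + 1 < n := by omega
  refine ⟨indep_A2, fun B hB hsub => ?_⟩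
  ext w
  refine ⟨fun h => hsub h, fun hw => ?_⟩
  by_contra hnw
  rw [mem_A2] at hnw
  push_neg at hnw
  set e : Fin n := ⟨dd n m + 1, hdn⟩ with he
  have he' : (e:ℕ) = dd n m + 1 := rfl
  have heA : e ∈ A2 n m := mem_A2.mpr (by omega)
  exact hB w hw e (hsub heA) ((adj_iff w e).mpr (by omega))

private lemma classify {n m : ℕ} (hn : 0 < n) {A : Finset (Fin n)}
    (hA : MaxIndep (lexGraph n m) A) :
    (∃ v : Fin n, (v:ℕ) < dd n m ∧ A = {v}) ∨ A = A1 n m ∨ (tt n m ≠ 0 ∧ A = A2 n m) := by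
  have hdn : dd n m < n := by have := dd_le n m; omega
  set e : Fin n := ⟨dd n m, hdn⟩ with he
  have he' : (e:ℕ) = dd n m := rfl
  by_cases h1 : ∃ v ∈ A, (v:ℕ) < dd n m
  · obtain ⟨v, hvA, hvd⟩ := h1
    left
    refine ⟨v, hvd, ?_⟩
    ext w
    refine ⟨fun hw => ?_, fun hw => ?_⟩
    · rw [mem_singleton]
      by_contra hne
      have hne' : (w:ℕ) ≠ (v:ℕ) := fun h => hne (Fin.ext h)
      exact hA.1 v hvA w hw ((adj_iff v w).mpr (by omega))
    · rw [mem_singleton] at hw; subst hw; exact hvA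
  · push_neg at h1
    by_cases h2 : e ∈ A
    · right; left
      have hsub : A ⊆ A1 n m := by
        intro w hw
        rw [mem_A1]
        by_contra hnw
        push_neg at hnw
        have hge := h1 w hw
        exact hA.1 e h2 w hw ((adj_iff e w).mpr (by omega))
      exact (hA.2 (A1 n m) indep_A1 hsub).symm ▸ hA.2 (A1 n m) indep_A1 hsub
    · have hgt : ∀ w ∈ A, dd n m < (w:ℕ) := by
        intro w hw
        have := h1 w hw
        rcases Nat.lt_or_ge (dd n m) (w:ℕ) with h | h
        · exact h
        · exfalso; apply h2
          have : w = e := Fin.ext (by omega)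
          rwa [this] at hw
      by_cases h3 : tt n m = 0
      · exfalso
        have hind : Indep (lexGraph n m) (insert e A) := by
          apply indep_of_gt
          intro x hx
          rcases mem_insert.mp hx with h | h
          · subst h; omega
          · have := hgt x h; omega
        have := hA.2 (insert e A) hind (subset_insert e A)
        exact h2 (this ▸ mem_insert_self e A)
      · right; right
        refine ⟨h3, ?_⟩
        have hsub : A ⊆ A2 n m := fun w hw => mem_A2.mpr (hgt w hw)
        exact hA.2 (A2 n m) indep_A2 hsub

private lemma indep_of_gt' {n m : ℕ} {S : Finset (Fin n)}
    (h : ∀ x ∈ S, dd n m < (x:ℕ)) : Indep (lexGraph n m) S := by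
  intro a ha b hb hadj
  rw [adj_iff] at hadj
  have ha' := h a ha
  have hb' := h b hb
  omega

private lemma itv_singleton {n m : ℕ} {v : Fin n} (hvd : (v:ℕ) < dd n m)
    (X : Finset (Fin n)) :
    X ∈ Itv ({v} \ IntAct (lexGraph n m) {v}) ({v} ∪ ExtAct (lexGraph n m) {v}) ↔
      (v ∈ X ∧ ∀ w ∈ X, (v:ℕ) ≤ (w:ℕ)) := by
  have hd := dd_le n m
  have hv1 : (v:ℕ) + 1 < n := by omega
  set u : Fin n := ⟨(v:ℕ)+1, hv1⟩ with hu
  have hu' : (u:ℕ) = (v:ℕ) + 1 := rfl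
  have hlow : {v} \ IntAct (lexGraph n m) {v} = {v} := by
    rw [Finset.sdiff_eq_self_iff_disjoint, Finset.disjoint_singleton_left]
    rw [IntAct, mem_filter]
    rintro ⟨-, hall⟩
    have huS : u ∈ Subs (lexGraph n m) {v} v := by
      rw [Subs, mem_filter]
      refine ⟨mem_univ _, (adj_iff v u).mpr (by omega), ?_⟩
      rw [Finset.erase_singleton, LawfulSingleton.insert_empty_eq]
      intro a ha b hb hadj
      simp only [mem_singleton] at ha hb
      subst ha; subst hb
      exact (lexGraph n m).irrefl hadj
    have := hall u huS
    rw [Fin.lt_def] at this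
    omega
  have hhigh : {v} ∪ ExtAct (lexGraph n m) {v} =
      univ.filter (fun w : Fin n => (v:ℕ) ≤ (w:ℕ)) := by
    ext w
    rw [mem_union, mem_singleton, ExtAct, mem_filter, mem_filter]
    simp only [mem_univ, true_and, mem_singleton]
    constructor
    · rintro (rfl | ⟨-, a, rfl, -, hlt⟩)
      · exact le_refl _
      · exact le_of_lt (Fin.lt_def.mp hlt)
    · intro hle
      rcases Nat.eq_or_lt_of_le hle with h | h
      · exact Or.inl (Fin.ext h.symm)
      · refine Or.inr ⟨fun hh => by rw [hh] at h; omega, v, rfl, (adj_iff w v).mpr (by omega),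
          Fin.lt_def.mpr h⟩
  rw [Itv, Set.mem_setOf_eq, hlow, hhigh]
  constructor
  · rintro ⟨h1, h2⟩
    refine ⟨h1 (mem_singleton_self v), fun w hw => (mem_filter.mp (h2 hw)).2⟩
  · rintro ⟨h1, h2⟩
    exact ⟨singleton_subset_iff.mpr h1, fun w hw => mem_filter.mpr ⟨mem_univ _, h2 w hw⟩⟩

private lemma itv_A1 {n m : ℕ} (hn : 0 < n) (X : Finset (Fin n)) :
    X ∈ Itv (A1 n m \ IntAct (lexGraph n m) (A1 n m))
        (A1 n m ∪ ExtAct (lexGraph n m) (A1 n m)) ↔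
      ((tt n m ≠ 0 → (⟨dd n m, by have := dd_le n m; omega⟩ : Fin n) ∈ X) ∧
        ∀ w ∈ X, dd n m ≤ (w:ℕ)) := by
  have hd := dd_le n m
  have ht := tt_le n m
  have hdn : dd n m < n := by omega
  set e : Fin n := ⟨dd n m, hdn⟩ with he
  have he' : (e:ℕ) = dd n m := rfl
  have heA : e ∈ A1 n m := mem_A1.mpr (Or.inl rfl)
  have hint : ∀ w : Fin n, w ∈ IntAct (lexGraph n m) (A1 n m) ↔
      (w ∈ A1 n m ∧ (tt n m = 0 ∨ dd n m + tt n m < (w:ℕ))) := by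
    intro w
    rw [IntAct, mem_filter]
    constructor
    · rintro ⟨hw, hall⟩
      refine ⟨hw, ?_⟩
      by_contra hc
      push_neg at hc
      obtain ⟨ht0, hwle⟩ := hc
      have hwd : (w:ℕ) = dd n m := by
        rcases mem_A1.mp hw with h | h
        · exact h
        · omega
      have hwe : w = e := Fin.ext (by omega)
      have hd1n : dd n m + 1 < n := by omega
      set u : Fin n := ⟨dd n m + 1, hd1n⟩ with hu
      have hu' : (u:ℕ) = dd n m + 1 := rfl
      have huS : u ∈ Subs (lexGraph n m) (A1 n m) w := by
        rw [Subs, mem_filter]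
        refine ⟨mem_univ _, (adj_iff w u).mpr (by omega), ?_⟩
        apply indep_of_gt'
        intro x hx
        rcases mem_insert.mp hx with h | h
        · subst h; omega
        · have hx1 := mem_A1.mp (mem_of_mem_erase h)
          have hxne := ne_of_mem_erase h
          have : (x:ℕ) ≠ dd n m := fun hh => hxne (Fin.ext (by omega))
          omega
      have := hall u huS
      rw [Fin.lt_def] at this
      omega
    · rintro ⟨hw, hcond⟩
      refine ⟨hw, fun u hu => ?_⟩
      rw [Subs, mem_filter] at hu
      have hadj := hu.2.1
      rw [adj_iff] at hadj
      have hwA := mem_A1.mp hw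
      rw [Fin.lt_def]
      omega
  have hext : ∀ w : Fin n, w ∈ ExtAct (lexGraph n m) (A1 n m) ↔
      (dd n m < (w:ℕ) ∧ (w:ℕ) ≤ dd n m + tt n m) := by
    intro w
    rw [ExtAct, mem_filter]
    simp only [mem_univ, true_and]
    constructor
    · rintro ⟨hnw, a, haA, hadj, hlt⟩
      rw [adj_iff] at hadj
      have haA' := mem_A1.mp haA
      rw [Fin.lt_def] at hlt
      rw [mem_A1] at hnw
      omega
    · rintro ⟨h1, h2⟩
      refine ⟨by rw [mem_A1]; omega, e, heA, (adj_iff w e).mpr (by omega),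
        Fin.lt_def.mpr (by omega)⟩
  rw [Itv, Set.mem_setOf_eq]
  constructor
  · rintro ⟨h1, h2⟩
    constructor
    · intro ht0
      apply h1
      rw [mem_sdiff, hint]
      refine ⟨heA, ?_⟩
      push_neg
      exact fun _ => ⟨ht0, by omega⟩
    · intro w hw
      have := h2 hw
      rcases mem_union.mp this with h | h
      · have := mem_A1.mp h; omega
      · have := (hext w).mp h; omega
  · rintro ⟨h1, h2⟩
    constructor
    · intro w hw
      rw [mem_sdiff, hint] at hw
      obtain ⟨hwA, hwc⟩ := hw
      push_neg at hwc
      have hwd : (w:ℕ) = dd n m := by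
        rcases mem_A1.mp hwA with h | h
        · exact h
        · have := (hwc hwA).2; omega
      have : w = e := Fin.ext (by omega)
      rw [this]
      exact h1 (hwc hwA).1
    · intro w hw
      have hwd := h2 w hw
      rcases Nat.lt_or_ge (dd n m + tt n m) (w:ℕ) with h | h
      · exact mem_union_left _ (mem_A1.mpr (Or.inr h))
      · rcases Nat.eq_or_lt_of_le hwd with h' | h'
        · exact mem_union_left _ (mem_A1.mpr (Or.inl h'.symm))
        · exact mem_union_right _ ((hext w).mpr ⟨h', h⟩)

private lemma itv_A2 {n m : ℕ} (ht : tt n m ≠ 0) (X : Finset (Fin n)) :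
    X ∈ Itv (A2 n m \ IntAct (lexGraph n m) (A2 n m))
        (A2 n m ∪ ExtAct (lexGraph n m) (A2 n m)) ↔
      ∀ w ∈ X, dd n m < (w:ℕ) := by
  have hint : IntAct (lexGraph n m) (A2 n m) = A2 n m := by
    ext w
    rw [IntAct, mem_filter]
    constructor
    · exact fun h => h.1
    · intro hw
      refine ⟨hw, fun u hu => ?_⟩
      rw [Subs, mem_filter] at hu
      have hadj := hu.2.1
      rw [adj_iff] at hadj
      have hwA := mem_A2.mp hw
      rw [Fin.lt_def]
      omega
  have hext : ExtAct (lexGraph n m) (A2 n m) = ∅ := by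
    apply Finset.eq_empty_of_forall_notMem
    intro w hw
    rw [ExtAct, mem_filter] at hw
    obtain ⟨-, -, a, haA, hadj, hlt⟩ := hw
    rw [adj_iff] at hadj
    have := mem_A2.mp haA
    rw [Fin.lt_def] at hlt
    omega
  rw [Itv, Set.mem_setOf_eq, hint, hext, Finset.sdiff_self, Finset.union_empty]
  constructor
  · rintro ⟨-, h2⟩
    exact fun w hw => mem_A2.mp (h2 hw)
  · intro h
    exact ⟨Finset.empty_subset _, fun w hw => mem_A2.mpr (h w hw)⟩


/-- For any lex graph the intervals generated by the maximal independent sets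
form a partition of the Boolean lattice of the vertex set. -/
theorem lexGraph_partition (n m : ℕ) :
    (⋃ A ∈ {A : Finset (Fin n) | MaxIndep (lexGraph n m) A},
        Itv (A \ IntAct (lexGraph n m) A) (A ∪ ExtAct (lexGraph n m) A)) = Set.univ ∧
    ({A : Finset (Fin n) | MaxIndep (lexGraph n m) A}.PairwiseDisjoint
        (fun A => Itv (A \ IntAct (lexGraph n m) A) (A ∪ ExtAct (lexGraph n m) A))) := by
  rcases Nat.eq_zero_or_pos n with hn | hn
  · subst hn
    constructor
    · apply Set.eq_univ_of_forall
      intro X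
      have hmax : MaxIndep (lexGraph 0 m) (∅ : Finset (Fin 0)) := by
        refine ⟨fun u hu => u.elim0, fun B hB hsub => ?_⟩
        ext w; exact w.elim0
      rw [Set.mem_iUnion₂]
      exact ⟨∅, hmax, fun w hw => w.elim0, fun w hw => w.elim0⟩
    · intro A hA B hB hne
      exact absurd (by ext w; exact w.elim0 : A = B) hne
  · constructor
    · apply Set.eq_univ_of_forall
      intro X
      rw [Set.mem_iUnion₂]
      by_cases h1 : ∃ v ∈ X, (v:ℕ) < dd n m
      · obtain ⟨v0, hv0X, hv0d⟩ := h1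
        have hXne : X.Nonempty := ⟨v0, hv0X⟩
        set v := X.min' hXne with hv
        have hvX : v ∈ X := X.min'_mem _
        have hvle : ∀ w ∈ X, v ≤ w := fun w hw => X.min'_le w hw
        have hvd : (v:ℕ) < dd n m :=
          lt_of_le_of_lt (Fin.le_def.mp (hvle v0 hv0X)) hv0d
        exact ⟨{v}, maxIndep_singleton hvd,
          (itv_singleton hvd X).mpr ⟨hvX, fun w hw => Fin.le_def.mp (hvle w hw)⟩⟩
      · push_neg at h1
        by_cases h3 : tt n m = 0
        · exact ⟨A1 n m, maxIndep_A1 hn, (itv_A1 hn X).mpr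
            ⟨fun ht0 => absurd h3 ht0, fun w hw => h1 w hw⟩⟩
        · by_cases h2 : ∃ v ∈ X, (v:ℕ) = dd n m
          · obtain ⟨v, hvX, hvd⟩ := h2
            refine ⟨A1 n m, maxIndep_A1 hn, (itv_A1 hn X).mpr
              ⟨fun _ => ?_, fun w hw => h1 w hw⟩⟩
            have : (⟨dd n m, by have := dd_le n m; omega⟩ : Fin n) = v :=
              Fin.ext (by simp [hvd])
            rw [this]; exact hvX
          · push_neg at h2
            refine ⟨A2 n m, maxIndep_A2 h3, (itv_A2 h3 X).mpr ?_⟩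
            intro w hw
            have ha := h1 w hw
            have hb := h2 w hw
            omega
    · intro A hA B hB hne
      rw [Function.onFun, Set.disjoint_left]
      intro X hXA hXB
      rw [Set.mem_setOf_eq] at hA hB
      rcases classify hn hA with ⟨v, hvd, rfl⟩ | rfl | ⟨ht, rfl⟩ <;>
        rcases classify hn hB with ⟨v', hvd', rfl⟩ | rfl | ⟨ht', rfl⟩
      · have h1 := (itv_singleton hvd X).mp hXA
        have h2 := (itv_singleton hvd' X).mp hXB
        have ha := h1.2 v' h2.1
        have hb := h2.2 v h1.1
        exact hne (by rw [show v = v' from Fin.ext (by omega)])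
      · have h1 := (itv_singleton hvd X).mp hXA
        have h2 := (itv_A1 hn X).mp hXB
        have := h2.2 v h1.1
        omega
      · have h1 := (itv_singleton hvd X).mp hXA
        have := (itv_A2 ht' X).mp hXB v h1.1
        omega
      · have h1 := (itv_singleton hvd' X).mp hXB
        have h2 := (itv_A1 hn X).mp hXA
        have := h2.2 v' h1.1
        omega
      · exact hne rfl
      · have h1 := (itv_A1 hn X).mp hXA
        have := (itv_A2 ht' X).mp hXB _ (h1.1 ht')
        exact lt_irrefl _ this
      · have h1 := (itv_singleton hvd' X).mp hXB
        have := (itv_A2 ht X).mp hXA v' h1.1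
        omega
      · have h1 := (itv_A1 hn X).mp hXB
        have := (itv_A2 ht X).mp hXA _ (h1.1 ht)
        exact lt_irrefl _ this
      · exact hne rfl
end

section
/- For any colex graph C(n,m), the intervals [A \ Int(A); A ∪ Ext(A)] over all maximal independent sets A form a partition of 2^{[n]}. -/
open Finset

/-- The colexicographic rank (0-indexed) of the pair `{a,b}` with `a < b`. -/
def colexRank (a b : ℕ) : ℕ := b * (b - 1) / 2 + a

/-- The colex graph `C(n,m)`: vertex set `{0,…,n-1}`, edges the first `m`
pairs in colexicographic order. -/
def colexGraph (n m : ℕ) : SimpleGraph (Fin n) where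
  Adj u v := u ≠ v ∧ colexRank (min (u : ℕ) (v : ℕ)) (max (u : ℕ) (v : ℕ)) < m
  symm := by
    constructor
    intro u v h
    exact ⟨h.1.symm, by rw [min_comm, max_comm]; exact h.2⟩
  loopless := by
    constructor
    intro u h
    exact h.1 rfl

instance (n m : ℕ) : DecidableRel (colexGraph n m).Adj := fun u v =>
  inferInstanceAs (Decidable (u ≠ v ∧ colexRank (min (u : ℕ) (v : ℕ)) (max (u : ℕ) (v : ℕ)) < m))

section ColexAux

variable {n m : ℕ}

lemma colexRank_le_colexRank {a b a' b' : ℕ} (ha : a ≤ a') (hb : b ≤ b') :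
    colexRank a b ≤ colexRank a' b' :=
  Nat.add_le_add (Nat.div_le_div_right (Nat.mul_le_mul hb (by omega))) ha

lemma adj_mono {w v u : Fin n} (h : (colexGraph n m).Adj w v)
    (huv : u < v) (hwu : w ≠ u) : (colexGraph n m).Adj w u := by
  obtain ⟨hne, hr⟩ := h
  refine ⟨hwu, lt_of_le_of_lt ?_ hr⟩
  have h1 : (u : ℕ) < (v : ℕ) := huv
  have h2 : (w : ℕ) ≠ (v : ℕ) := fun e => hne (Fin.val_injective e)
  have h3 : (w : ℕ) ≠ (u : ℕ) := fun e => hwu (Fin.val_injective e)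
  exact colexRank_le_colexRank (by omega) (by omega)

/-- `v` has a strictly larger neighbour. -/
def Big (n m : ℕ) (v : Fin n) : Prop := ∃ w, v < w ∧ (colexGraph n m).Adj v w

instance : DecidablePred (Big n m) := fun v => by unfold Big; infer_instance

lemma big_down {u v : Fin n} (hv : Big n m v) (h : u < v) : Big n m u := by
  obtain ⟨w, hvw, hadj⟩ := hv
  exact ⟨w, h.trans hvw, (adj_mono hadj.symm h (h.trans hvw).ne').symm⟩

lemma big_clique {u v : Fin n} (hne : u ≠ v) (hu : Big n m u) (hv : Big n m v) :
    (colexGraph n m).Adj u v := by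
  rcases hne.lt_or_gt with h | h
  · obtain ⟨w, hvw, hadj⟩ := hv
    exact (adj_mono hadj (h.trans hvw) (fun e => hne e.symm)).symm
  · obtain ⟨w, huw, hadj⟩ := hu
    exact adj_mono hadj (h.trans huw) hne

lemma exists_top_nbr {v : Fin n} (hv : Big n m v) :
    ∃ w, ¬ Big n m w ∧ (colexGraph n m).Adj v w := by
  classical
  obtain ⟨w0, hw0, hadj0⟩ := hv
  have hs : (univ.filter (fun w => v < w ∧ (colexGraph n m).Adj v w)).Nonempty :=
    ⟨w0, by simp [hw0, hadj0]⟩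
  have hwmem := mem_filter.1 ((univ.filter
      (fun w => v < w ∧ (colexGraph n m).Adj v w)).max'_mem hs)
  refine ⟨_, ?_, hwmem.2.2⟩
  rintro ⟨w', hww', hadj'⟩
  have hvw' : (colexGraph n m).Adj v w' :=
    (adj_mono hadj'.symm (hwmem.2.1) (hww'.trans' hwmem.2.1).ne').symm
  have hmem' : w' ∈ univ.filter (fun w => v < w ∧ (colexGraph n m).Adj v w) := by
    simp [hwmem.2.1.trans hww', hvw']
  exact absurd (le_max' _ w' hmem') (not_le.mpr hww')

/-- The set of vertices with no larger neighbour. -/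
def TopSet (n m : ℕ) : Finset (Fin n) := univ.filter (fun v => ¬ Big n m v)

/-- The maximal independent set generated by a `Big` vertex `c`. -/
def Mset (n m : ℕ) (c : Fin n) : Finset (Fin n) :=
  insert c (univ.filter (fun v => ¬ Big n m v ∧ ¬ (colexGraph n m).Adj c v))

lemma mem_TopSet {v : Fin n} : v ∈ TopSet n m ↔ ¬ Big n m v := by simp [TopSet]

lemma mem_Mset {c v : Fin n} :
    v ∈ Mset n m c ↔ v = c ∨ (¬ Big n m v ∧ ¬ (colexGraph n m).Adj c v) := by
  simp [Mset]

lemma indep_insert {G : SimpleGraph (Fin n)} [DecidableRel G.Adj] {A : Finset (Fin n)}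
    {v : Fin n} (hA : Indep G A) (h : ∀ a ∈ A, ¬ G.Adj a v) : Indep G (insert v A) := by
  intro x hx y hy hxy
  rcases mem_insert.1 hx with hx | hx <;> rcases mem_insert.1 hy with hy | hy
  · rw [hx, hy] at hxy; exact G.loopless.irrefl _ hxy
  · rw [hx] at hxy; exact h y hy hxy.symm
  · rw [hy] at hxy; exact h x hx hxy
  · exact hA x hx y hy hxy

lemma indep_Top : Indep (colexGraph n m) (TopSet n m) := by
  intro u hu v hv hadj
  rw [mem_TopSet] at hu hv
  rcases ((colexGraph n m).ne_of_adj hadj).lt_or_gt with h | h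
  · exact hu ⟨v, h, hadj⟩
  · exact hv ⟨u, h, hadj.symm⟩

lemma indep_M {c : Fin n} : Indep (colexGraph n m) (Mset n m c) := by
  intro u hu v hv hadj
  rw [mem_Mset] at hu hv
  rcases hu with rfl | ⟨hub, hua⟩
  · rcases hv with rfl | ⟨hvb, hva⟩
    · exact (colexGraph n m).loopless.irrefl _ hadj
    · exact hva hadj
  · rcases hv with rfl | ⟨hvb, hva⟩
    · exact hua hadj.symm
    · rcases ((colexGraph n m).ne_of_adj hadj).lt_or_gt with h | h
      · exact hub ⟨v, h, hadj⟩
      · exact hvb ⟨u, h, hadj.symm⟩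

lemma maxIndep_of {G : SimpleGraph (Fin n)} {A : Finset (Fin n)} (hA : Indep G A)
    (hdom : ∀ v, v ∉ A → ∃ a ∈ A, G.Adj a v) : MaxIndep G A := by
  refine ⟨hA, fun B hB hAB => ?_⟩
  apply Finset.Subset.antisymm hAB
  intro v hvB
  by_contra hvA
  obtain ⟨a, haA, hadj⟩ := hdom v hvA
  exact hB a (hAB haA) v hvB hadj

lemma max_Top : MaxIndep (colexGraph n m) (TopSet n m) := by
  refine maxIndep_of indep_Top (fun v hv => ?_)
  rw [mem_TopSet, not_not] at hv
  obtain ⟨w, hw, hadj⟩ := exists_top_nbr hv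
  exact ⟨w, mem_TopSet.2 hw, hadj.symm⟩

lemma max_M {c : Fin n} (hc : Big n m c) : MaxIndep (colexGraph n m) (Mset n m c) := by
  refine maxIndep_of indep_M (fun v hv => ?_)
  rw [mem_Mset] at hv
  push_neg at hv
  obtain ⟨hvc, hv2⟩ := hv
  have hadj : (colexGraph n m).Adj c v := by
    by_cases hb : Big n m v
    · exact big_clique (fun e => hvc e.symm) hc hb
    · exact hv2 hb
  exact ⟨c, mem_Mset.2 (Or.inl rfl), hadj⟩

lemma mem_of_insert_indep {G : SimpleGraph (Fin n)} {A : Finset (Fin n)} {v : Fin n}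
    (hA : MaxIndep G A) (h : Indep G (insert v A)) : v ∈ A := by
  have := hA.2 (insert v A) h (subset_insert _ _)
  rw [this]; exact mem_insert_self _ _

lemma classify_s17 {A : Finset (Fin n)} (hA : MaxIndep (colexGraph n m) A) :
    A = TopSet n m ∨ ∃ c, Big n m c ∧ A = Mset n m c := by
  by_cases h : ∃ c ∈ A, Big n m c
  · right
    obtain ⟨c, hcA, hc⟩ := h
    refine ⟨c, hc, ?_⟩
    have hsub : A ⊆ Mset n m c := by
      intro a ha
      rw [mem_Mset]
      by_cases hac : a = c
      · exact Or.inl hac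
      · refine Or.inr ⟨fun hb => ?_, fun hadj => hA.1 c hcA a ha hadj⟩
        exact hA.1 c hcA a ha (big_clique (Ne.symm hac) hc hb)
    refine Finset.Subset.antisymm hsub (fun v hv => ?_)
    by_contra hvA
    have hvc : v ≠ c := fun e => hvA (e ▸ hcA)
    rw [mem_Mset] at hv
    rcases hv with rfl | ⟨hvb, hva⟩
    · exact hvc rfl
    · refine hvA (mem_of_insert_indep hA (indep_insert hA.1 (fun a ha hadj => ?_)))
      have haM := hsub ha
      rw [mem_Mset] at haM
      rcases haM with rfl | ⟨hab, _⟩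
      · exact hva hadj
      · rcases ((colexGraph n m).ne_of_adj hadj).lt_or_gt with hlt | hlt
        · exact hab ⟨v, hlt, hadj⟩
        · exact hvb ⟨a, hlt, hadj.symm⟩
  · left
    push_neg at h
    have hsub : A ⊆ TopSet n m := fun a ha => mem_TopSet.2 (h a ha)
    refine Finset.Subset.antisymm hsub (fun v hv => ?_)
    rw [mem_TopSet] at hv
    by_contra hvA
    refine hvA (mem_of_insert_indep hA (indep_insert hA.1 (fun a ha hadj => ?_)))
    rcases ((colexGraph n m).ne_of_adj hadj).lt_or_gt with hlt | hlt
    · exact h a ha ⟨v, hlt, hadj⟩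
    · exact hv ⟨a, hlt, hadj.symm⟩

lemma intAct_eq {A : Finset (Fin n)} (hA : Indep (colexGraph n m) A) :
    IntAct (colexGraph n m) A = A.filter (fun v => ¬ Big n m v) := by
  unfold IntAct
  apply filter_congr
  intro v hv
  constructor
  · intro h hbig
    obtain ⟨w, hvw, hadj⟩ := hbig
    have hw : w ∈ Subs (colexGraph n m) A v := by
      rw [Subs, mem_filter]
      refine ⟨mem_univ _, hadj, ?_⟩
      intro x hx y hy hxy
      rcases mem_insert.1 hx with hx | hx <;> rcases mem_insert.1 hy with hy | hy
      · rw [hx, hy] at hxy; exact (colexGraph n m).loopless.irrefl _ hxy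
      · rw [hx] at hxy
        exact hA y (mem_erase.1 hy).2 v hv (adj_mono hxy.symm hvw (mem_erase.1 hy).1)
      · rw [hy] at hxy
        exact hA x (mem_erase.1 hx).2 v hv (adj_mono hxy hvw (mem_erase.1 hx).1)
      · exact hA x (mem_erase.1 hx).2 y (mem_erase.1 hy).2 hxy
    exact absurd (h w hw) (not_lt.mpr hvw.le)
  · intro hnb u hu
    rw [Subs, mem_filter] at hu
    have hadj : (colexGraph n m).Adj v u := hu.2.1
    rcases ((colexGraph n m).ne_of_adj hadj).lt_or_gt with h | h
    · exact absurd ⟨u, h, hadj⟩ hnb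
    · exact h

lemma Top_sdiff : TopSet n m \ IntAct (colexGraph n m) (TopSet n m) = ∅ := by
  rw [intAct_eq indep_Top]
  ext v
  simp only [mem_sdiff, mem_filter, notMem_empty, iff_false, mem_TopSet]
  tauto

lemma Top_union : TopSet n m ∪ ExtAct (colexGraph n m) (TopSet n m) = TopSet n m := by
  rw [union_eq_left]
  intro v hv
  rw [ExtAct, mem_filter] at hv
  obtain ⟨-, -, a, ha, hadj, hav⟩ := hv
  rw [mem_TopSet] at ha
  exact absurd ⟨v, hav, hadj.symm⟩ ha

lemma M_sdiff {c : Fin n} (hc : Big n m c) :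
    Mset n m c \ IntAct (colexGraph n m) (Mset n m c) = {c} := by
  rw [intAct_eq indep_M]
  ext v
  simp only [mem_sdiff, mem_filter, mem_singleton, not_and]
  constructor
  · rintro ⟨hv, h2⟩
    rcases mem_Mset.1 hv with rfl | ⟨hvb, -⟩
    · rfl
    · exact absurd hvb (h2 hv)
  · rintro rfl
    exact ⟨mem_Mset.2 (Or.inl rfl), fun _ h => h hc⟩

lemma le_of_mem_Mset {c v : Fin n} (hc : Big n m c) (hv : v ∈ Mset n m c) : c ≤ v := by
  rcases mem_Mset.1 hv with rfl | ⟨hvb, -⟩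
  · exact le_refl _
  · by_contra h
    exact hvb (big_down hc (not_le.1 h))

lemma M_union {c : Fin n} (hc : Big n m c) :
    Mset n m c ∪ ExtAct (colexGraph n m) (Mset n m c) = univ.filter (fun v => c ≤ v) := by
  ext v
  simp only [mem_union, mem_filter, mem_univ, true_and]
  constructor
  · rintro (hv | hv)
    · exact le_of_mem_Mset hc hv
    · rw [ExtAct, mem_filter] at hv
      obtain ⟨-, -, a, ha, -, hav⟩ := hv
      exact (le_of_mem_Mset hc ha).trans hav.le
  · intro hcv
    rcases eq_or_lt_of_le hcv with rfl | hlt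
    · exact Or.inl (mem_Mset.2 (Or.inl rfl))
    · by_cases hM : v ∈ Mset n m c
      · exact Or.inl hM
      · right
        rw [ExtAct, mem_filter]
        refine ⟨mem_univ _, hM, c, mem_Mset.2 (Or.inl rfl), ?_, hlt⟩
        have hvc : v ≠ c := hlt.ne'
        by_cases hb : Big n m v
        · exact (big_clique hvc.symm hc hb).symm
        · rw [mem_Mset] at hM
          push_neg at hM
          exact (hM.2 hb).symm

end ColexAux


/-- For any colex graph the intervals generated by the maximal independent sets
form a partition of the Boolean lattice of the vertex set. -/
theorem colexGraph_partition (n m : ℕ) :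
    (⋃ A ∈ {A : Finset (Fin n) | MaxIndep (colexGraph n m) A},
        Itv (A \ IntAct (colexGraph n m) A) (A ∪ ExtAct (colexGraph n m) A)) = Set.univ ∧
    ({A : Finset (Fin n) | MaxIndep (colexGraph n m) A}.PairwiseDisjoint
        (fun A => Itv (A \ IntAct (colexGraph n m) A) (A ∪ ExtAct (colexGraph n m) A))) := by
  constructor
  · rw [Set.eq_univ_iff_forall]
    intro X
    simp only [Set.mem_iUnion, Set.mem_setOf_eq]
    by_cases h : ∃ c ∈ X, Big n m c
    · have hs : (X.filter (Big n m)).Nonempty := by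
        obtain ⟨c, hc, hb⟩ := h
        exact ⟨c, mem_filter.2 ⟨hc, hb⟩⟩
      set c := (X.filter (Big n m)).min' hs with hc_def
      have hcs := (X.filter (Big n m)).min'_mem hs
      rw [mem_filter] at hcs
      obtain ⟨hcX, hcB⟩ := hcs
      refine ⟨Mset n m c, max_M hcB, ?_, ?_⟩
      · rw [M_sdiff hcB]
        exact singleton_subset_iff.2 hcX
      · rw [M_union hcB]
        intro u hu
        rw [mem_filter]
        refine ⟨mem_univ _, ?_⟩
        by_contra hle
        have huB : Big n m u := big_down hcB (not_le.1 hle)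
        exact hle ((X.filter (Big n m)).min'_le u (mem_filter.2 ⟨hu, huB⟩))
    · push_neg at h
      refine ⟨TopSet n m, max_Top, ?_, ?_⟩
      · rw [Top_sdiff]
        exact empty_subset _
      · rw [Top_union]
        exact fun u hu => mem_TopSet.2 (h u hu)
  · intro A hA B hB hne
    rw [Function.onFun, Set.disjoint_left]
    intro X hXA hXB
    rw [Set.mem_setOf_eq] at hA hB
    obtain ⟨hA1, hA2⟩ := hXA
    obtain ⟨hB1, hB2⟩ := hXB
    refine absurd ?_ hne
    rcases classify_s17 hA with rfl | ⟨c, hc, rfl⟩ <;> rcases classify_s17 hB with rfl | ⟨d, hd, rfl⟩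
    · rfl
    · exfalso
      rw [Top_union] at hA2
      rw [M_sdiff hd] at hB1
      have : d ∈ X := hB1 (mem_singleton_self d)
      exact mem_TopSet.1 (hA2 this) hd
    · exfalso
      rw [Top_union] at hB2
      rw [M_sdiff hc] at hA1
      have : c ∈ X := hA1 (mem_singleton_self c)
      exact mem_TopSet.1 (hB2 this) hc
    · rw [M_sdiff hc] at hA1
      rw [M_sdiff hd] at hB1
      rw [M_union hc] at hA2
      rw [M_union hd] at hB2
      have hcX : c ∈ X := hA1 (mem_singleton_self c)
      have hdX : d ∈ X := hB1 (mem_singleton_self d)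
      have h1 : d ≤ c := (mem_filter.1 (hB2 hcX)).2
      have h2 : c ≤ d := (mem_filter.1 (hA2 hdX)).2
      rw [le_antisymm h2 h1]
end
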